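/- For every integer k ≥ 2, every element of ℤ_{4k²} can be written as a·1 + b·(2k-1) + c·(2k²) with integers a, b, c satisfying |a| + |b| + |c| ≤ k and c ∈ {0,1}; consequently the circulant graph on ℤ_{4k²} with connection set {±1, ±(2k-1), 2k²} has diameter at most k. -/

import Mathlib

/-- The circulant graph on `ZMod n` with connection set `C` (symmetrized). -/
def circulantGraph (n : ℕ) (C : Set (ZMod n)) : SimpleGraph (ZMod n) :=
  SimpleGraph.fromRel (fun i j => j - i ∈ C)


lemma rep_nonneg (k u : ℤ) (hk : 2 ≤ k) (h0 : 0 ≤ u) (h1 : u ≤ 2*k^2 + k - 1) :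
    ∃ a b c : ℤ, (c = 0 ∨ c = 1) ∧ a + b*(2*k-1) + c*(2*k^2) = u ∧ |a| + |b| + c ≤ k := by
  have hg : (0:ℤ) < 2*k-1 := by linarith
  set q := (u + k - 1) / (2*k - 1) with hq
  set r := (u + k - 1) % (2*k - 1) with hr
  have hdiv : q * (2*k-1) + r = u + k - 1 := Int.ediv_mul_add_emod (u+k-1) (2*k-1)
  have hr0 : 0 ≤ r := Int.emod_nonneg _ (by linarith)
  have hr1 : r < 2*k-1 := Int.emod_lt_of_pos _ hg
  set a := r - (k-1) with ha
  have hu : q * (2*k-1) + a = u := by rw [ha]; linarith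
  have ha1 : -(k-1) ≤ a := by omega
  have ha2 : a ≤ k-1 := by omega
  have hq0 : 0 ≤ q := Int.ediv_nonneg (by linarith) (by linarith)
  have hq2 : q ≤ k + 1 := by nlinarith
  by_cases hA : q + |a| ≤ k
  · refine ⟨a, q, 0, Or.inl rfl, by linarith, ?_⟩
    have : 0 ≤ q := hq0
    rw [abs_of_nonneg hq0] at *
    have := abs_nonneg a
    linarith
  · push_neg at hA
    by_cases hB : 1 ≤ a
    · have haa : |a| = a := abs_of_nonneg (by linarith)
      have hqk : q ≤ k := by nlinarith [abs_nonneg a]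
      refine ⟨a - k, q - k, 1, Or.inr rfl, by ring_nf; linarith [hu], ?_⟩
      rw [abs_of_nonpos (by linarith), abs_of_nonpos (by linarith)]
      rw [haa] at hA
      linarith
    · push_neg at hB
      have haa : |a| = -a := abs_of_nonpos (by linarith)
      refine ⟨a + k - 1, q - k - 1, 1, Or.inr rfl, by ring_nf; linarith [hu], ?_⟩
      rw [abs_of_nonneg (by linarith), abs_of_nonpos (by linarith)]
      rw [haa] at hA
      linarith

lemma rep_mod (k v : ℤ) (hk : 2 ≤ k) (h0 : 0 ≤ v) (h1 : v < 4*k^2) :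
    ∃ a b c : ℤ, (c = 0 ∨ c = 1) ∧ (4*k^2) ∣ (a + b*(2*k-1) + c*(2*k^2) - v) ∧
      |a| + |b| + c ≤ k := by
  by_cases hv : v ≤ 2*k^2 + k - 1
  · obtain ⟨a, b, c, hc, he, hb⟩ := rep_nonneg k v hk h0 hv
    exact ⟨a, b, c, hc, by rw [he]; simp, hb⟩
  · push_neg at hv
    obtain ⟨a, b, c, hc, he, hb⟩ := rep_nonneg k (4*k^2 - v) hk (by linarith) (by linarith)
    refine ⟨-a, -b, c, hc, ?_, by simpa using hb⟩
    rcases hc with h | h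
    · subst h; exact ⟨-1, by linarith⟩
    · subst h; exact ⟨0, by linarith⟩



section
variable (k : ℕ) (hk : 2 ≤ k)

abbrev N := 4 * k ^ 2
noncomputable abbrev gg : ZMod (N k) := ((2 * (k : ℤ) - 1 : ℤ) : ZMod (N k))
abbrev hh : ZMod (N k) := ((2 * k ^ 2 : ℕ) : ZMod (N k))
noncomputable abbrev G : SimpleGraph (ZMod (N k)) :=
  circulantGraph (N k) {1, -1, gg k, -(gg k), hh k}

include hk

lemma one_ne : (1 : ZMod (N k)) ≠ 0 := by
  haveI : Fact (1 < N k) := ⟨by nlinarith⟩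
  exact one_ne_zero

lemma g_ne : gg k ≠ 0 := by
  intro hd
  rw [gg, ZMod.intCast_zmod_eq_zero_iff_dvd] at hd
  have h1 : (0:ℤ) < 2 * (k:ℤ) - 1 := by
    have : (2:ℤ) ≤ (k:ℤ) := by exact_mod_cast hk
    linarith
  have := Int.le_of_dvd h1 hd
  have h2 : (2:ℤ) ≤ (k:ℤ) := by exact_mod_cast hk
  push_cast at this
  nlinarith

lemma h_ne : hh k ≠ 0 := by
  intro hd
  rw [hh, ZMod.natCast_eq_zero_iff] at hd
  have := Nat.le_of_dvd (by positivity) hd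
  nlinarith

lemma adj1 (x : ZMod (N k)) : (G k).Adj x (x + 1) := by
  rw [G, circulantGraph, SimpleGraph.fromRel_adj]
  exact ⟨fun h => one_ne k hk (left_eq_add.mp h), Or.inl (by simp)⟩

lemma adjm1 (x : ZMod (N k)) : (G k).Adj x (x - 1) := by
  rw [G, circulantGraph, SimpleGraph.fromRel_adj]
  refine ⟨fun h => one_ne k hk ?_, Or.inr (by simp)⟩
  have := sub_eq_self.mp h.symm
  simpa using this

lemma adjg (x : ZMod (N k)) : (G k).Adj x (x + gg k) := by
  rw [G, circulantGraph, SimpleGraph.fromRel_adj]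
  exact ⟨fun h => g_ne k hk (left_eq_add.mp h), Or.inl (by simp)⟩

lemma adjmg (x : ZMod (N k)) : (G k).Adj x (x - gg k) := by
  rw [G, circulantGraph, SimpleGraph.fromRel_adj]
  refine ⟨fun h => g_ne k hk ?_, Or.inr (by simp)⟩
  have := sub_eq_self.mp h.symm
  simpa using this

lemma adjh (x : ZMod (N k)) : (G k).Adj x (x + hh k) := by
  rw [G, circulantGraph, SimpleGraph.fromRel_adj]
  exact ⟨fun h => h_ne k hk (left_eq_add.mp h), Or.inl (by simp)⟩

lemma walk_lem : ∀ (m : ℕ) (a b c : ℤ), (c = 0 ∨ c = 1) →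
    a.natAbs + b.natAbs + c.natAbs ≤ m → ∀ i : ZMod (N k),
    ∃ p : (G k).Walk i (i + (a : ZMod (N k)) + (b : ZMod (N k)) * gg k
      + (c : ZMod (N k)) * hh k), p.length ≤ m := by
  intro m
  induction m with
  | zero =>
    intro a b c _ hle i
    have ha : a = 0 := by omega
    have hb : b = 0 := by omega
    have hc : c = 0 := by omega
    subst ha; subst hb; subst hc
    exact ⟨SimpleGraph.Walk.nil.copy rfl (by push_cast; ring), by simp⟩
  | succ m ih =>
    intro a b c hc hle i
    by_cases h0 : a.natAbs + b.natAbs + c.natAbs ≤ m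
    · obtain ⟨p, hp⟩ := ih a b c hc h0 i
      exact ⟨p, hp.trans (Nat.le_succ m)⟩
    · rcases lt_trichotomy a 0 with ha | ha | ha
      · obtain ⟨p, hp⟩ := ih (a + 1) b c hc (by omega) (i - 1)
        refine ⟨(SimpleGraph.Walk.cons (adjm1 k hk i) p).copy rfl (by push_cast; ring), ?_⟩
        simpa using Nat.succ_le_succ hp
      · rcases lt_trichotomy b 0 with hb | hb | hb
        · obtain ⟨p, hp⟩ := ih a (b + 1) c hc (by omega) (i - gg k)
          refine ⟨(SimpleGraph.Walk.cons (adjmg k hk i) p).copy rfl (by push_cast; ring), ?_⟩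
          simpa using Nat.succ_le_succ hp
        · rcases hc with hc0 | hc1
          · omega
          · obtain ⟨p, hp⟩ := ih a b 0 (Or.inl rfl) (by omega) (i + hh k)
            refine ⟨(SimpleGraph.Walk.cons (adjh k hk i) p).copy rfl
              (by subst hc1; subst ha; push_cast; ring), ?_⟩
            simpa using Nat.succ_le_succ hp
        · obtain ⟨p, hp⟩ := ih a (b - 1) c hc (by omega) (i + gg k)
          refine ⟨(SimpleGraph.Walk.cons (adjg k hk i) p).copy rfl (by push_cast; ring), ?_⟩
          simpa using Nat.succ_le_succ hp
      · obtain ⟨p, hp⟩ := ih (a - 1) b c hc (by omega) (i + 1)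
        refine ⟨(SimpleGraph.Walk.cons (adj1 k hk i) p).copy rfl (by push_cast; ring), ?_⟩
        simpa using Nat.succ_le_succ hp

end

theorem degree5_diameter (k : ℕ) (hk : 2 ≤ k) :
    (∀ v : ZMod (4 * k ^ 2),
      ∃ a b c : ℤ, c ∈ ({0, 1} : Set ℤ) ∧
        v = (a : ZMod (4 * k ^ 2)) * 1 +
            (b : ZMod (4 * k ^ 2)) * ((2 * (k : ℤ) - 1 : ℤ) : ZMod (4 * k ^ 2)) +
            (c : ZMod (4 * k ^ 2)) * ((2 * k ^ 2 : ℕ) : ZMod (4 * k ^ 2)) ∧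
        a.natAbs + b.natAbs + c.natAbs ≤ k) ∧
    (∀ i j : ZMod (4 * k ^ 2),
      (circulantGraph (4 * k ^ 2)
        {1, -1, ((2 * (k : ℤ) - 1 : ℤ) : ZMod (4 * k ^ 2)),
          -((2 * (k : ℤ) - 1 : ℤ) : ZMod (4 * k ^ 2)),
          ((2 * k ^ 2 : ℕ) : ZMod (4 * k ^ 2))}).dist i j ≤ k) := by
  haveI : NeZero (4 * k ^ 2) := ⟨by positivity⟩
  have part1 : ∀ v : ZMod (4 * k ^ 2),
      ∃ a b c : ℤ, c ∈ ({0, 1} : Set ℤ) ∧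
        v = (a : ZMod (4 * k ^ 2)) * 1 +
            (b : ZMod (4 * k ^ 2)) * ((2 * (k : ℤ) - 1 : ℤ) : ZMod (4 * k ^ 2)) +
            (c : ZMod (4 * k ^ 2)) * ((2 * k ^ 2 : ℕ) : ZMod (4 * k ^ 2)) ∧
        a.natAbs + b.natAbs + c.natAbs ≤ k := by
    intro v
    have hvlt : v.val < 4 * k ^ 2 := ZMod.val_lt v
    obtain ⟨a, b, c, hc, hdvd, hb⟩ := rep_mod (k : ℤ) (v.val : ℤ) (by exact_mod_cast hk)
      (Int.natCast_nonneg _) (by exact_mod_cast hvlt)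
    refine ⟨a, b, c, by rcases hc with h | h <;> simp [h], ?_, ?_⟩
    · have key : ((a + b*(2*(k:ℤ)-1) + c*(2*(k:ℤ)^2) - (v.val : ℤ) : ℤ) : ZMod (4*k^2)) = 0 := by
        rw [ZMod.intCast_zmod_eq_zero_iff_dvd]
        exact_mod_cast hdvd
      have hv : ((v.val : ℕ) : ZMod (4*k^2)) = v := ZMod.natCast_rightInverse v
      push_cast at key ⊢
      rw [← hv]
      linear_combination -key
    · rw [Int.abs_eq_natAbs, Int.abs_eq_natAbs] at hb
      omega
  refine ⟨part1, ?_⟩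
  intro i j
  obtain ⟨a, b, c, hc, heq, hle⟩ := part1 (j - i)
  have hc' : c = 0 ∨ c = 1 := by simpa using hc
  obtain ⟨p, hp⟩ := walk_lem k hk k a b c hc' hle i
  have hj : i + (a : ZMod (4 * k ^ 2)) + (b : ZMod (4 * k ^ 2)) * gg k
      + (c : ZMod (4 * k ^ 2)) * hh k = j := by
    rw [gg, hh]
    linear_combination -heq
  exact le_trans (SimpleGraph.dist_le (p.copy rfl hj)) (by simpa using hp)
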